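/- Let d be a real number with d ≥ 1, and let λ ≤ μ be partitions of n in the dominance ordering. Then m + d·n(λ) − (d−1)·n(λᵗ) ≥ m + d·n(μ) − (d−1)·n(μᵗ) for any constant m, with equality if and only if λ = μ. -/

import Mathlib

/-- The partition statistic `n(μ) = Σ_i (i-1)·μ_i`, computed as the sum of the
(0-indexed) row indices of the cells of the Young diagram. -/
def nStat (μ : YoungDiagram) : ℕ := ∑ c ∈ μ.cells, c.1

/-- Dominance ordering on Young diagrams (partitions). -/
def Dominates (lam μ : YoungDiagram) : Prop :=
  ∀ k : ℕ, ∑ i ∈ Finset.range k, lam.rowLen i ≤ ∑ i ∈ Finset.range k, μ.rowLen i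

open Finset

lemma colLen_le_card (a : YoungDiagram) (j : ℕ) : a.colLen j ≤ a.cells.card := by
  rw [YoungDiagram.colLen_eq_card, YoungDiagram.col]
  exact Finset.card_filter_le _ _

lemma fst_lt_of_mem {a : YoungDiagram} {c : ℕ × ℕ} (hc : c ∈ a.cells) :
    c.1 < a.cells.card := by
  rw [a.mem_cells] at hc
  have h0 : (c.1, 0) ∈ a := a.up_left_mem le_rfl (Nat.zero_le _) (by rwa [Prod.mk.eta])
  rw [YoungDiagram.mem_iff_lt_colLen] at h0
  exact lt_of_lt_of_le h0 (colLen_le_card a 0)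

lemma rowLen_zero {a : YoungDiagram} {i : ℕ} (h : a.cells.card ≤ i) : a.rowLen i = 0 := by
  by_contra hne
  have hmem : (i, 0) ∈ a := by
    rw [YoungDiagram.mem_iff_lt_rowLen]; omega
  have := fst_lt_of_mem ((a.mem_cells _).mpr hmem)
  simp only at this; omega

lemma card_transpose (a : YoungDiagram) : a.transpose.cells.card = a.cells.card := by
  simp [YoungDiagram.transpose]

lemma cells_eq_biUnion (a : YoungDiagram) {N : ℕ} (h : a.cells.card ≤ N) :
    a.cells = (range N).biUnion a.row := by
  ext c
  simp only [Finset.mem_biUnion, Finset.mem_range, YoungDiagram.mem_row_iff, a.mem_cells]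
  constructor
  · intro hc
    exact ⟨c.1, lt_of_lt_of_le (fst_lt_of_mem ((a.mem_cells _).mpr hc)) h, hc, rfl⟩
  · rintro ⟨i, _, hc, _⟩; exact hc

lemma rows_disjoint (a : YoungDiagram) {N : ℕ} : ∀ x ∈ range N, ∀ y ∈ range N, x ≠ y →
    Disjoint (a.row x) (a.row y) := by
  intro x _ y _ hxy
  rw [Finset.disjoint_left]
  intro c hcx hcy
  rw [YoungDiagram.mem_row_iff] at hcx hcy
  exact hxy (hcx.2 ▸ hcy.2 ▸ rfl)

lemma card_eq_sum_rowLen (a : YoungDiagram) {N : ℕ} (h : a.cells.card ≤ N) :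
    a.cells.card = ∑ i ∈ range N, a.rowLen i := by
  rw [cells_eq_biUnion a h, Finset.card_biUnion (rows_disjoint a)]
  exact Finset.sum_congr rfl fun i _ => (a.rowLen_eq_card).symm

lemma nStat_eq (a : YoungDiagram) {N : ℕ} (h : a.cells.card ≤ N) :
    nStat a = ∑ i ∈ range N, i * a.rowLen i := by
  rw [nStat, cells_eq_biUnion a h, Finset.sum_biUnion (rows_disjoint a)]
  refine Finset.sum_congr rfl fun i _ => ?_
  have : ∀ c ∈ a.row i, c.1 = i := fun c hc => (YoungDiagram.mem_row_iff.mp hc).2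
  calc ∑ c ∈ a.row i, c.1 = ∑ _c ∈ a.row i, i := Finset.sum_congr rfl this
    _ = (a.row i).card * i := by rw [Finset.sum_const, smul_eq_mul]
    _ = i * a.rowLen i := by rw [a.rowLen_eq_card, mul_comm]

/-- Abel-type identity. -/
lemma abel_identity (f : ℕ → ℕ) (N : ℕ) :
    ∑ i ∈ range N, i * f i + ∑ k ∈ range N, ∑ i ∈ range (k + 1), f i
      = N * ∑ i ∈ range N, f i := by
  induction N with
  | zero => simp
  | succ N ih =>
    rw [Finset.sum_range_succ (f := fun i => i * f i),
        Finset.sum_range_succ (f := fun k => ∑ i ∈ range (k + 1), f i),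
        Finset.sum_range_succ f, add_mul, one_mul, Nat.mul_add]
    omega

lemma sum_ite_lt (m N : ℕ) : (∑ i ∈ range N, if i < m then 1 else 0) = min m N := by
  induction N with
  | zero => simp
  | succ N ih =>
    rw [Finset.sum_range_succ, ih]
    split_ifs <;> omega

lemma colsum (a : YoungDiagram) {N : ℕ} (h : a.cells.card ≤ N) (k : ℕ) :
    ∑ j ∈ range k, a.colLen j = ∑ i ∈ range N, min (a.rowLen i) k := by
  have h1 : ∀ j, a.colLen j = ∑ i ∈ range N, if i < a.colLen j then 1 else 0 := by
    intro j
    rw [sum_ite_lt]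
    exact (min_eq_left ((colLen_le_card a j).trans h)).symm
  calc ∑ j ∈ range k, a.colLen j
      = ∑ j ∈ range k, ∑ i ∈ range N, if i < a.colLen j then 1 else 0 :=
        Finset.sum_congr rfl fun j _ => h1 j
    _ = ∑ i ∈ range N, ∑ j ∈ range k, if i < a.colLen j then 1 else 0 := Finset.sum_comm
    _ = ∑ i ∈ range N, ∑ j ∈ range k, if j < a.rowLen i then 1 else 0 := by
        refine Finset.sum_congr rfl fun i _ => Finset.sum_congr rfl fun j _ => ?_
        congr 1
        rw [← YoungDiagram.mem_iff_lt_colLen, ← YoungDiagram.mem_iff_lt_rowLen]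
    _ = ∑ i ∈ range N, min (a.rowLen i) k :=
        Finset.sum_congr rfl fun i _ => sum_ite_lt _ _

/-- Key truncated-sum inequality. -/
lemma tsub_sum_le (lam μ : YoungDiagram) (hdom : Dominates lam μ) {N k : ℕ}
    (hN : lam.cells.card ≤ N) (hk : 0 < k) :
    ∑ i ∈ range N, (lam.rowLen i - k) ≤ ∑ i ∈ range N, (μ.rowLen i - k) := by
  have hex : ∃ i, lam.rowLen i < k := ⟨lam.cells.card, by rw [rowLen_zero le_rfl]; omega⟩
  set s := Nat.find hex with hs
  have hslt : lam.rowLen s < k := Nat.find_spec hex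
  have hsle : ∀ i < s, k ≤ lam.rowLen i := fun i hi => le_of_not_gt (Nat.find_min hex hi)
  have hsN : s ≤ N := Nat.find_le (by rw [rowLen_zero hN]; omega)
  have h1 : ∑ i ∈ range N, (lam.rowLen i - k) = ∑ i ∈ range s, (lam.rowLen i - k) := by
    rw [← Finset.sum_range_add_sum_Ico _ hsN]
    have hz : ∑ i ∈ Finset.Ico s N, (lam.rowLen i - k) = 0 := by
      refine Finset.sum_eq_zero fun i hi => ?_
      have := lam.rowLen_anti s i (Finset.mem_Ico.mp hi).1
      omega
    omega
  have h2 : ∑ i ∈ range s, (lam.rowLen i - k) + s * k = ∑ i ∈ range s, lam.rowLen i := by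
    have : (∑ i ∈ range s, (lam.rowLen i - k)) + ∑ _i ∈ range s, k
        = ∑ i ∈ range s, lam.rowLen i := by
      rw [← Finset.sum_add_distrib]
      exact Finset.sum_congr rfl fun i hi =>
        Nat.sub_add_cancel (hsle i (Finset.mem_range.mp hi))
    simpa [mul_comm] using this
  have h3 : ∑ i ∈ range s, lam.rowLen i ≤ ∑ i ∈ range s, μ.rowLen i := hdom s
  have h4 : ∑ i ∈ range s, μ.rowLen i ≤ ∑ i ∈ range s, (μ.rowLen i - k) + s * k := by
    have : ∑ i ∈ range s, μ.rowLen i ≤ ∑ i ∈ range s, ((μ.rowLen i - k) + k) :=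
      Finset.sum_le_sum fun i _ => by omega
    simpa [Finset.sum_add_distrib, mul_comm] using this
  have h5 : ∑ i ∈ range s, (μ.rowLen i - k) ≤ ∑ i ∈ range N, (μ.rowLen i - k) :=
    Finset.sum_le_sum_of_subset (Finset.range_subset_range.mpr hsN)
  omega

/-- Lemma A: dominance gives `nStat μ ≤ nStat lam`, equality only if equal. -/
lemma nStat_ge (lam μ : YoungDiagram) (hdom : Dominates lam μ)
    (hcc : lam.cells.card = μ.cells.card) :
    nStat μ ≤ nStat lam ∧ (nStat lam = nStat μ → lam = μ) := by
  obtain ⟨N, hN⟩ : ∃ N, lam.cells.card = N := ⟨_, rfl⟩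
  have hNl : lam.cells.card ≤ N := hN.le
  have hNm : μ.cells.card ≤ N := by omega
  have idl : nStat lam + ∑ k ∈ range N, ∑ i ∈ range (k + 1), lam.rowLen i
      = N * lam.cells.card := by
    rw [nStat_eq lam hNl, abel_identity, ← card_eq_sum_rowLen lam hNl]
  have idm : nStat μ + ∑ k ∈ range N, ∑ i ∈ range (k + 1), μ.rowLen i
      = N * μ.cells.card := by
    rw [nStat_eq μ hNm, abel_identity, ← card_eq_sum_rowLen μ hNm]
  have hterm : ∀ k ∈ range N, ∑ i ∈ range (k + 1), lam.rowLen i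
      ≤ ∑ i ∈ range (k + 1), μ.rowLen i := fun k _ => hdom (k + 1)
  have hsum : ∑ k ∈ range N, ∑ i ∈ range (k + 1), lam.rowLen i
      ≤ ∑ k ∈ range N, ∑ i ∈ range (k + 1), μ.rowLen i := Finset.sum_le_sum hterm
  have hNc : N * lam.cells.card = N * μ.cells.card := by rw [hcc]
  constructor
  · omega
  · intro heq
    have hsumeq : ∑ k ∈ range N, ∑ i ∈ range (k + 1), lam.rowLen i
        = ∑ k ∈ range N, ∑ i ∈ range (k + 1), μ.rowLen i := by
      omega
    have hkeq : ∀ k ∈ range N, ∑ i ∈ range (k + 1), lam.rowLen i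
        = ∑ i ∈ range (k + 1), μ.rowLen i :=
      fun k hk => ((Finset.sum_eq_sum_iff_of_le hterm).mp hsumeq) k hk
    have hSeq : ∀ t ≤ N, ∑ i ∈ range t, lam.rowLen i = ∑ i ∈ range t, μ.rowLen i := by
      intro t ht
      match t with
      | 0 => simp
      | (k+1) => exact hkeq k (Finset.mem_range.mpr ht)
    have hrow : ∀ i, lam.rowLen i = μ.rowLen i := by
      intro i
      by_cases hi : i < N
      · have e1 := hSeq i (le_of_lt hi)
        have e2 := hSeq (i + 1) hi
        rw [Finset.sum_range_succ, Finset.sum_range_succ] at e2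
        omega
      · rw [rowLen_zero (show lam.cells.card ≤ i by omega),
            rowLen_zero (show μ.cells.card ≤ i by omega)]
    ext ⟨i, j⟩
    rw [YoungDiagram.mem_cells, YoungDiagram.mem_cells,
        YoungDiagram.mem_iff_lt_rowLen, YoungDiagram.mem_iff_lt_rowLen, hrow i]

/-- Dominance is reversed by transposition. -/
lemma dominates_transpose (lam μ : YoungDiagram) (hdom : Dominates lam μ)
    (hcc : lam.cells.card = μ.cells.card) :
    Dominates μ.transpose lam.transpose := by
  intro k
  simp only [YoungDiagram.rowLen_transpose]
  obtain ⟨N, hN⟩ : ∃ N, lam.cells.card = N := ⟨_, rfl⟩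
  have hNl : lam.cells.card ≤ N := hN.le
  have hNm : μ.cells.card ≤ N := by omega
  rw [colsum μ hNm k, colsum lam hNl k]
  rcases Nat.eq_zero_or_pos k with rfl | hk
  · simp
  · have htot : ∑ i ∈ range N, lam.rowLen i = ∑ i ∈ range N, μ.rowLen i := by
      rw [← card_eq_sum_rowLen lam hNl, ← card_eq_sum_rowLen μ hNm, hcc]
    have hts := tsub_sum_le lam μ hdom hNl hk
    have el : ∑ i ∈ range N, min (lam.rowLen i) k + ∑ i ∈ range N, (lam.rowLen i - k)
        = ∑ i ∈ range N, lam.rowLen i := by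
      rw [← Finset.sum_add_distrib]
      exact Finset.sum_congr rfl fun i _ => by omega
    have em : ∑ i ∈ range N, min (μ.rowLen i) k + ∑ i ∈ range N, (μ.rowLen i - k)
        = ∑ i ∈ range N, μ.rowLen i := by
      rw [← Finset.sum_add_distrib]
      exact Finset.sum_congr rfl fun i _ => by omega
    omega

/-- for real `d ≥ 1` and partitions `λ ≤ μ` of `n` in the dominance order,
`m + d·n(λ) − (d−1)·n(λᵗ) ≥ m + d·n(μ) − (d−1)·n(μᵗ)` for any constant `m`,
with equality if and only if `λ = μ`. -/
theorem weight_inequality_shifted (n : ℕ) (d m : ℝ) (hd : 1 ≤ d)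
    (lam μ : YoungDiagram)
    (hlam : lam.cells.card = n) (hμ : μ.cells.card = n)
    (hdom : Dominates lam μ) :
    m + d * (nStat μ : ℝ) - (d - 1) * (nStat μ.transpose : ℝ) ≤
      m + d * (nStat lam : ℝ) - (d - 1) * (nStat lam.transpose : ℝ) ∧
    (m + d * (nStat lam : ℝ) - (d - 1) * (nStat lam.transpose : ℝ) =
      m + d * (nStat μ : ℝ) - (d - 1) * (nStat μ.transpose : ℝ) ↔ lam = μ) := by
  have hcc : lam.cells.card = μ.cells.card := by rw [hlam, hμ]
  obtain ⟨hA1, hA2⟩ := nStat_ge lam μ hdom hcc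
  have hdomT := dominates_transpose lam μ hdom hcc
  have hccT : μ.transpose.cells.card = lam.transpose.cells.card := by
    rw [card_transpose, card_transpose, hcc]
  obtain ⟨hB1, _⟩ := nStat_ge μ.transpose lam.transpose hdomT hccT
  have hA1' : (nStat μ : ℝ) ≤ (nStat lam : ℝ) := by exact_mod_cast hA1
  have hB1' : (nStat lam.transpose : ℝ) ≤ (nStat μ.transpose : ℝ) := by exact_mod_cast hB1
  constructor
  · nlinarith [mul_nonneg (by linarith : (0:ℝ) ≤ d) (by linarith : (0:ℝ) ≤ (nStat lam : ℝ) - (nStat μ : ℝ)),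
      mul_nonneg (by linarith : (0:ℝ) ≤ d - 1)
        (by linarith : (0:ℝ) ≤ (nStat μ.transpose : ℝ) - (nStat lam.transpose : ℝ))]
  · constructor
    · intro heq
      apply hA2
      have : (nStat lam : ℝ) = (nStat μ : ℝ) := by
        nlinarith [mul_nonneg (by linarith : (0:ℝ) ≤ d - 1)
          (by linarith : (0:ℝ) ≤ (nStat μ.transpose : ℝ) - (nStat lam.transpose : ℝ))]
      exact_mod_cast this
    · rintro rfl; rfl
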